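/- Let U ⊂ V be a nonempty proper subset. For every β ∈ ℝ^V, writing β = (β_U, β_{U^c}), the density of ν_V^{W,θ,η} factorizes pointwise as the product of a marginal and a conditional density: f_V^{W,θ,η}(β) = f_U^{W_{U,U},θ_U,η̂}(β_U) · f_{U^c}^{W̌,θ_{U^c},η̌}(β_{U^c}), where η̂_i = η_i + Σ_{j∈U^c} W_{i,j} θ_j for i ∈ U, and, whenever (H_β)_{U,U} is positive definite, W̌ = W_{U^c,U^c} + W_{U^c,U} ((H_β)_{U,U})^{-1} W_{U,U^c} and η̌ = η_{U^c} + W_{U^c,U} ((H_β)_{U,U})^{-1} η_U; here f_S^{W',θ',η'} denotes the density of ν_S^{W',θ',η'}, and both sides are understood to vanish when (H_β)_{U,U} is not positive definite. -/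

import Mathlib

open MeasureTheory Matrix

/-- The matrix `H_β = 2 diag(β) - W`. -/
noncomputable def Hmat {V : Type*} [Fintype V] [DecidableEq V]
    (W : Matrix V V ℝ) (β : V → ℝ) : Matrix V V ℝ :=
  Matrix.diagonal (fun i => 2 * β i) - W

open scoped Classical in
/-- The density of the measure `ν_V^{W,θ,η}` with respect to Lebesgue measure. -/
noncomputable def nuDens {V : Type*} [Fintype V] [DecidableEq V]
    (W : Matrix V V ℝ) (θ η : V → ℝ) (β : V → ℝ) : ℝ :=
  if (Hmat W β).PosDef then
    (2 / Real.pi) ^ ((Fintype.card V : ℝ) / 2) *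
      Real.exp (-(1/2) * (θ ⬝ᵥ ((Hmat W β) *ᵥ θ)) - (1/2) * (η ⬝ᵥ ((Hmat W β)⁻¹ *ᵥ η))
        + η ⬝ᵥ θ) *
      (∏ i, θ i) / Real.sqrt (Hmat W β).det
  else 0

section NuHelpers

set_option linter.unusedSectionVars false

variable {m n : Type*} [Fintype m] [Fintype n] [DecidableEq m] [DecidableEq n]

lemma nuF_dotProduct_comp_equiv (e : m ≃ n) (u v : n → ℝ) : (u ∘ e) ⬝ᵥ (v ∘ e) = u ⬝ᵥ v :=
  Fintype.sum_equiv e _ _ (fun _ => rfl)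

lemma nuF_posDef_submatrix_equiv' {M : Matrix n n ℝ} (e : m ≃ n) (hM : M.PosDef) :
    (M.submatrix e e).PosDef := by
  refine posDef_iff_dotProduct_mulVec.2 ⟨(isHermitian_submatrix_equiv e).2 hM.1, fun x hx => ?_⟩
  have hx' : x ∘ e.symm ≠ 0 := by
    intro h; apply hx; ext i
    have := congrFun h (e i); simpa using this
  have h2 := hM.dotProduct_mulVec_pos hx'
  have h3 : star x ⬝ᵥ (M.submatrix e e *ᵥ x) = star (x ∘ e.symm) ⬝ᵥ (M *ᵥ (x ∘ e.symm)) := by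
    rw [submatrix_mulVec_equiv]
    simp only [star_trivial]
    have hxe : x = (x ∘ e.symm) ∘ e := by ext i; simp
    calc x ⬝ᵥ ((M *ᵥ (x ∘ e.symm)) ∘ e)
        = ((x ∘ e.symm) ∘ e) ⬝ᵥ ((M *ᵥ (x ∘ e.symm)) ∘ e) := by rw [← hxe]
      _ = _ := nuF_dotProduct_comp_equiv e _ _
  rw [h3]; exact h2

lemma nuF_posDef_submatrix_equiv {M : Matrix n n ℝ} (e : m ≃ n) :
    (M.submatrix e e).PosDef ↔ M.PosDef := by
  refine ⟨fun h => ?_, nuF_posDef_submatrix_equiv' e⟩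
  have := nuF_posDef_submatrix_equiv' e.symm h
  simpa using this

lemma nuF_quad_equiv (e : m ≃ n) (M : Matrix n n ℝ) (u v : n → ℝ) :
    u ⬝ᵥ M *ᵥ v = (u ∘ e) ⬝ᵥ (M.submatrix e e) *ᵥ (v ∘ e) := by
  rw [submatrix_mulVec_equiv]
  have h : (v ∘ e) ∘ e.symm = v := by ext i; simp
  rw [h]
  exact (nuF_dotProduct_comp_equiv e u _).symm

lemma nuF_Hmat_submatrix {V : Type*} [Fintype V] [DecidableEq V]
    (W : Matrix V V ℝ) (β : V → ℝ) (f : m → V) (hf : Function.Injective f) :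
    Hmat (W.submatrix f f) (fun i => β (f i)) = (Hmat W β).submatrix f f := by
  ext i j
  simp [Hmat, Matrix.submatrix_apply, Matrix.diagonal_apply, hf.eq_iff, Matrix.sub_apply]

variable (A : Matrix m m ℝ) (B : Matrix m n ℝ) (D : Matrix n n ℝ)

lemma nuF_blockPosDef_left (h : (fromBlocks A B Bᵀ D).PosDef) : A.PosDef := by
  refine posDef_iff_dotProduct_mulVec.2 ⟨(isHermitian_fromBlocks_iff.1 h.1).1, fun x hx => ?_⟩
  have hne : (Sum.elim x (0 : n → ℝ)) ≠ 0 := by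
    intro hc; apply hx; ext i; exact congrFun hc (Sum.inl i)
  have := h.dotProduct_mulVec_pos hne
  simpa [fromBlocks_mulVec, sumElim_dotProduct_sumElim, Function.star_sumElim] using this

lemma nuF_blockPosDef_iff (hA : A.PosDef) :
    (fromBlocks A B Bᵀ D).PosDef ↔ (D - Bᵀ * A⁻¹ * B).PosDef := by
  haveI : Invertible A := A.invertibleOfIsUnitDet hA.det_pos.ne'.isUnit
  have hBt : Bᵀ = Bᴴ := (conjTranspose_eq_transpose_of_trivial B).symm
  rw [posDef_iff_dotProduct_mulVec, posDef_iff_dotProduct_mulVec, hBt, IsHermitian.fromBlocks₁₁ _ _ hA.1]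
  constructor
  · rintro ⟨h1, h2⟩
    refine ⟨h1, fun x hx => ?_⟩
    have hne : (Sum.elim (-((A⁻¹ * B) *ᵥ x)) x) ≠ 0 := by
      intro hc; apply hx; ext i; exact congrFun hc (Sum.inr i)
    have := h2 hne
    rw [dotProduct_mulVec, schur_complement_eq₁₁ B D _ _ hA.1] at this
    simp only [star_trivial, neg_add_cancel, dotProduct_zero, zero_add] at this
    rw [dotProduct_mulVec]
    simpa using this
  · rintro ⟨h1, h2⟩
    refine ⟨h1, fun x hx => ?_⟩
    rw [dotProduct_mulVec, ← Sum.elim_comp_inl_inr x, schur_complement_eq₁₁ B D _ _ hA.1]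
    rcases eq_or_ne (x ∘ Sum.inr) 0 with hy | hy
    · have hx1 : x ∘ Sum.inl ≠ 0 := by
        intro hc; apply hx; ext (i|i)
        · exact congrFun hc i
        · exact congrFun hy i
      have p1 := hA.dotProduct_mulVec_pos hx1
      rw [dotProduct_mulVec] at p1
      rw [hy]
      simp only [star_trivial, mulVec_zero, add_zero, dotProduct_zero, vecMul_zero,
        zero_dotProduct] at *
      linarith
    · have p1 := hA.posSemidef.dotProduct_mulVec_nonneg ((x ∘ Sum.inl) + (A⁻¹ * B) *ᵥ (x ∘ Sum.inr))
      have p2 := h2 hy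
      rw [dotProduct_mulVec] at p1 p2
      simp only [star_trivial] at *
      linarith

lemma nuF_blockInv (hA : A.PosDef) (hS : (D - Bᵀ * A⁻¹ * B).PosDef) :
    (fromBlocks A B Bᵀ D)⁻¹ =
      fromBlocks (A⁻¹ + A⁻¹*B*(D - Bᵀ*A⁻¹*B)⁻¹*(Bᵀ*A⁻¹)) (-(A⁻¹*B*(D - Bᵀ*A⁻¹*B)⁻¹))
        (-((D - Bᵀ*A⁻¹*B)⁻¹*(Bᵀ*A⁻¹))) ((D - Bᵀ*A⁻¹*B)⁻¹) := by
  haveI iA : Invertible A := A.invertibleOfIsUnitDet hA.det_pos.ne'.isUnit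
  haveI iS : Invertible (D - Bᵀ * A⁻¹ * B) :=
    (D - Bᵀ * A⁻¹ * B).invertibleOfIsUnitDet hS.det_pos.ne'.isUnit
  have hiA : ⅟A = A⁻¹ := invOf_eq_nonsing_inv A
  haveI iS' : Invertible (D - Bᵀ * ⅟A * B) := by rw [hiA]; exact iS
  haveI iH : Invertible (fromBlocks A B Bᵀ D) := fromBlocks₁₁Invertible A B Bᵀ D
  have h := invOf_fromBlocks₁₁_eq A B Bᵀ D
  rw [← invOf_eq_nonsing_inv, h]
  simp only [invOf_eq_nonsing_inv, hiA, Matrix.mul_assoc]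

lemma nuF_dv_shift {k l : Type*} [Fintype k] [Fintype l] (M : Matrix k l ℝ)
    (u : k → ℝ) (v : l → ℝ) :
    u ⬝ᵥ M *ᵥ v = (Mᵀ *ᵥ u) ⬝ᵥ v := by
  rw [dotProduct_mulVec, mulVec_transpose]

lemma nuF_dv_symm {k : Type*} [Fintype k] (M : Matrix k k ℝ) (hM : Mᵀ = M) (u v : k → ℝ) :
    u ⬝ᵥ M *ᵥ v = v ⬝ᵥ M *ᵥ u := by
  rw [nuF_dv_shift, hM, dotProduct_comm]

lemma nuF_exponent_eq (hA : A.PosDef) (hS : (D - Bᵀ * A⁻¹ * B).PosDef)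
    (hAt : Aᵀ = A) (hDt : Dᵀ = D) (x a : m → ℝ) (y b : n → ℝ) :
    -(1/2) * (Sum.elim x y ⬝ᵥ (fromBlocks A B Bᵀ D) *ᵥ Sum.elim x y)
      - (1/2) * (Sum.elim a b ⬝ᵥ (fromBlocks A B Bᵀ D)⁻¹ *ᵥ Sum.elim a b)
      + Sum.elim a b ⬝ᵥ Sum.elim x y
    = (-(1/2) * (x ⬝ᵥ A *ᵥ x) - (1/2) * ((a - B *ᵥ y) ⬝ᵥ A⁻¹ *ᵥ (a - B *ᵥ y))
        + (a - B *ᵥ y) ⬝ᵥ x)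
      + (-(1/2) * (y ⬝ᵥ (D - Bᵀ*A⁻¹*B) *ᵥ y)
        - (1/2) * ((b - (Bᵀ*A⁻¹) *ᵥ a) ⬝ᵥ (D - Bᵀ*A⁻¹*B)⁻¹ *ᵥ (b - (Bᵀ*A⁻¹) *ᵥ a))
        + (b - (Bᵀ*A⁻¹) *ᵥ a) ⬝ᵥ y) := by
  rw [nuF_blockInv A B D hA hS]
  simp only [fromBlocks_mulVec, sumElim_dotProduct_sumElim, Matrix.add_mulVec,
    Matrix.sub_mulVec, Matrix.neg_mulVec, mulVec_add, mulVec_sub, mulVec_neg,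
    dotProduct_add, dotProduct_sub, dotProduct_neg, add_dotProduct, sub_dotProduct,
    neg_dotProduct, ← mulVec_mulVec, Sum.elim_comp_inl, Sum.elim_comp_inr]
  have hA' : (A⁻¹)ᵀ = A⁻¹ := by rw [transpose_nonsing_inv, hAt]
  have hS't : ((D - Bᵀ*A⁻¹*B)⁻¹)ᵀ = (D - Bᵀ*A⁻¹*B)⁻¹ := by
    rw [transpose_nonsing_inv]
    congr 1
    simp [transpose_sub, transpose_mul, hDt, hA', Matrix.mul_assoc]
  have h1 : y ⬝ᵥ Bᵀ *ᵥ x = x ⬝ᵥ B *ᵥ y := by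
    rw [nuF_dv_shift Bᵀ, transpose_transpose, dotProduct_comm]
  have h2 : a ⬝ᵥ A⁻¹ *ᵥ B *ᵥ (D - Bᵀ*A⁻¹*B)⁻¹ *ᵥ Bᵀ *ᵥ A⁻¹ *ᵥ a
      = Bᵀ *ᵥ A⁻¹ *ᵥ a ⬝ᵥ (D - Bᵀ*A⁻¹*B)⁻¹ *ᵥ Bᵀ *ᵥ A⁻¹ *ᵥ a := by
    rw [nuF_dv_shift A⁻¹, hA', nuF_dv_shift B]
  have h3 : a ⬝ᵥ A⁻¹ *ᵥ B *ᵥ (D - Bᵀ*A⁻¹*B)⁻¹ *ᵥ b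
      = Bᵀ *ᵥ A⁻¹ *ᵥ a ⬝ᵥ (D - Bᵀ*A⁻¹*B)⁻¹ *ᵥ b := by
    rw [nuF_dv_shift A⁻¹, hA', nuF_dv_shift B]
  have h4 : B *ᵥ y ⬝ᵥ A⁻¹ *ᵥ a = a ⬝ᵥ A⁻¹ *ᵥ B *ᵥ y := nuF_dv_symm A⁻¹ hA' _ _
  have h5 : y ⬝ᵥ Bᵀ *ᵥ A⁻¹ *ᵥ B *ᵥ y = B *ᵥ y ⬝ᵥ A⁻¹ *ᵥ B *ᵥ y := by
    rw [nuF_dv_shift Bᵀ, transpose_transpose]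
  have h6 : Bᵀ *ᵥ A⁻¹ *ᵥ a ⬝ᵥ (D - Bᵀ*A⁻¹*B)⁻¹ *ᵥ b
      = b ⬝ᵥ (D - Bᵀ*A⁻¹*B)⁻¹ *ᵥ Bᵀ *ᵥ A⁻¹ *ᵥ a := nuF_dv_symm _ hS't _ _
  have h7 : Bᵀ *ᵥ A⁻¹ *ᵥ a ⬝ᵥ y = a ⬝ᵥ A⁻¹ *ᵥ B *ᵥ y := by
    rw [nuF_dv_shift A⁻¹, hA', nuF_dv_shift B]
  have h8 : B *ᵥ y ⬝ᵥ x = x ⬝ᵥ B *ᵥ y := dotProduct_comm _ _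
  rw [h1, h2, h3, h4, h5, h7, h8]
  rw [h6]
  ring

end NuHelpers

/-- The density of `ν_V^{W,θ,η}` factorizes pointwise as the product of the marginal
density on `U` and the conditional density on `Uᶜ`; when `(H_β)_{U,U}` is not positive
definite, the density vanishes. -/
theorem nu_density_factorization (N : ℕ) (W : Matrix (Fin N) (Fin N) ℝ)
    (hWsymm : W.IsSymm) (hWnonneg : ∀ i j, 0 ≤ W i j)
    (hconn : (SimpleGraph.fromRel (fun i j => 0 < W i j)).Connected)
    (θ η : Fin N → ℝ) (hθ : ∀ i, 0 < θ i) (hη : ∀ i, 0 ≤ η i)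
    (U : Finset (Fin N)) (hU : U.Nonempty) (hUproper : U ≠ Finset.univ)
    (β : Fin N → ℝ) :
    (¬ ((Hmat W β).submatrix (fun i : ↥U => (i : Fin N)) (fun j : ↥U => (j : Fin N))).PosDef
        → nuDens W θ η β = 0) ∧
    (((Hmat W β).submatrix (fun i : ↥U => (i : Fin N)) (fun j : ↥U => (j : Fin N))).PosDef
        → nuDens W θ η β =
      nuDens (W.submatrix (fun i : ↥U => (i : Fin N)) (fun j : ↥U => (j : Fin N)))
          (fun i : ↥U => θ i)
          (fun i : ↥U => η i + ∑ j ∈ Uᶜ, W i j * θ j)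
          (fun i : ↥U => β i) *
      nuDens
          (W.submatrix (fun i : ↥(Uᶜ) => (i : Fin N)) (fun j : ↥(Uᶜ) => (j : Fin N)) +
            W.submatrix (fun i : ↥(Uᶜ) => (i : Fin N)) (fun j : ↥U => (j : Fin N)) *
              ((Hmat W β).submatrix (fun i : ↥U => (i : Fin N)) (fun j : ↥U => (j : Fin N)))⁻¹ *
              W.submatrix (fun i : ↥U => (i : Fin N)) (fun j : ↥(Uᶜ) => (j : Fin N)))
          (fun i : ↥(Uᶜ) => θ i)
          ((fun i : ↥(Uᶜ) => η i) +
            (W.submatrix (fun i : ↥(Uᶜ) => (i : Fin N)) (fun j : ↥U => (j : Fin N)) *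
              ((Hmat W β).submatrix (fun i : ↥U => (i : Fin N)) (fun j : ↥U => (j : Fin N)))⁻¹)
              *ᵥ (fun i : ↥U => η i))
          (fun i : ↥(Uᶜ) => β i)) := by
  classical
  have hfU : Function.Injective (fun i : ↥U => (i : Fin N)) := Subtype.val_injective
  have hfC : Function.Injective (fun i : ↥(Uᶜ) => (i : Fin N)) := Subtype.val_injective
  set A := (Hmat W β).submatrix (fun i : ↥U => (i : Fin N)) (fun j : ↥U => (j : Fin N))
    with hAdef
  set B : Matrix ↥U ↥(Uᶜ) ℝ :=
    -(W.submatrix (fun i : ↥U => (i : Fin N)) (fun j : ↥(Uᶜ) => (j : Fin N))) with hBdef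
  set D := (Hmat W β).submatrix (fun i : ↥(Uᶜ) => (i : Fin N)) (fun j : ↥(Uᶜ) => (j : Fin N))
    with hDdef
  let e : (↥U ⊕ ↥(Uᶜ)) ≃ Fin N :=
    (Equiv.sumCongr (Equiv.refl ↥U)
      (Equiv.subtypeEquivRight (fun x => Finset.mem_compl))).trans
      (Equiv.sumCompl (· ∈ U))
  have hWt : Wᵀ = W := hWsymm
  have hHt : (Hmat W β)ᵀ = Hmat W β := by
    unfold Hmat; rw [transpose_sub, diagonal_transpose, hWt]
  have hAt : Aᵀ = A := by rw [hAdef, transpose_submatrix, hHt]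
  have hDt : Dᵀ = D := by rw [hDdef, transpose_submatrix, hHt]
  have hBt : Bᵀ = -(W.submatrix (fun i : ↥(Uᶜ) => (i : Fin N)) (fun j : ↥U => (j : Fin N))) := by
    rw [hBdef, transpose_neg, transpose_submatrix, hWt]
  have hne1 : ∀ (i : ↥U) (j : ↥(Uᶜ)), (i : Fin N) ≠ (j : Fin N) := by
    intro i j hc
    have hj := j.2
    rw [← hc] at hj
    exact (Finset.mem_compl.1 hj) i.2
  have hblock : (Hmat W β).submatrix e e = fromBlocks A B Bᵀ D := by
    ext z w
    rcases z with i | i <;> rcases w with j | j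
    · rfl
    · show Hmat W β (i : Fin N) (j : Fin N) = B i j
      rw [hBdef]
      simp [Hmat, Matrix.diagonal_apply_ne _ (hne1 i j)]
    · show Hmat W β (i : Fin N) (j : Fin N) = Bᵀ i j
      rw [hBt]
      simp [Hmat, Matrix.diagonal_apply_ne _ (Ne.symm (hne1 j i))]
    · rfl
  have hA_of_H : (Hmat W β).PosDef → A.PosDef := fun h =>
    nuF_blockPosDef_left A B D (hblock ▸ nuF_posDef_submatrix_equiv' e h)
  constructor
  · intro hnA
    unfold nuDens
    rw [if_neg (fun h => hnA (hA_of_H h))]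
  · intro hA
    haveI iA : Invertible A := A.invertibleOfIsUnitDet hA.det_pos.ne'.isUnit
    set S := D - Bᵀ * A⁻¹ * B with hSdef
    have hiff : (Hmat W β).PosDef ↔ S.PosDef := by
      rw [← nuF_posDef_submatrix_equiv e, hblock, hSdef]
      exact nuF_blockPosDef_iff A B D hA
    have hAeq : Hmat (W.submatrix (fun i : ↥U => (i : Fin N)) (fun j : ↥U => (j : Fin N)))
        (fun i : ↥U => β i) = A := by
      rw [hAdef]; exact nuF_Hmat_submatrix W β _ hfU
    have hDeq : Hmat (W.submatrix (fun i : ↥(Uᶜ) => (i : Fin N)) (fun j : ↥(Uᶜ) => (j : Fin N)))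
        (fun i : ↥(Uᶜ) => β i) = D := by
      rw [hDdef]; exact nuF_Hmat_submatrix W β _ hfC
    have hSeq : Hmat
        (W.submatrix (fun i : ↥(Uᶜ) => (i : Fin N)) (fun j : ↥(Uᶜ) => (j : Fin N)) +
          W.submatrix (fun i : ↥(Uᶜ) => (i : Fin N)) (fun j : ↥U => (j : Fin N)) * A⁻¹ *
            W.submatrix (fun i : ↥U => (i : Fin N)) (fun j : ↥(Uᶜ) => (j : Fin N)))
        (fun i : ↥(Uᶜ) => β i) = S := by
      have expand : ∀ (M P : Matrix ↥(Uᶜ) ↥(Uᶜ) ℝ) (v : ↥(Uᶜ) → ℝ),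
          Hmat (M + P) v = Hmat M v - P := by
        intro M P v; unfold Hmat; abel
      rw [expand, hDeq, hSdef, hBt, hBdef]
      simp [Matrix.neg_mul, Matrix.mul_neg]
    by_cases hH : (Hmat W β).PosDef
    · -- positive definite case
      have hS : S.PosDef := hiff.1 hH
      haveI iS : Invertible S := S.invertibleOfIsUnitDet hS.det_pos.ne'.isUnit
      set x : ↥U → ℝ := fun i : ↥U => θ i with hxdef
      set y : ↥(Uᶜ) → ℝ := fun i : ↥(Uᶜ) => θ i with hydef
      set a : ↥U → ℝ := fun i : ↥U => η i with hadef
      set b : ↥(Uᶜ) → ℝ := fun i : ↥(Uᶜ) => η i with hbdef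
      have hθe : θ ∘ e = Sum.elim x y := by
        funext z; rcases z with z | z <;> rfl
      have hηe : η ∘ e = Sum.elim a b := by
        funext z; rcases z with z | z <;> rfl
      have hhat : (fun i : ↥U => η i + ∑ j ∈ Uᶜ, W i j * θ j) = a - B *ᵥ y := by
        funext i
        have hsum : ∑ j ∈ Uᶜ, W i j * θ j = ∑ j : ↥(Uᶜ), W i (j : Fin N) * θ (j : Fin N) :=
          (Finset.sum_coe_sort (Uᶜ) (fun j => W i j * θ j)).symm
        simp only [Pi.sub_apply, hadef, hBdef, Matrix.neg_mulVec, Pi.neg_apply, sub_neg_eq_add,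
          mulVec, dotProduct, Matrix.submatrix_apply, hsum, hxdef, hydef]
      have hcheck : ((fun i : ↥(Uᶜ) => η i) +
            (W.submatrix (fun i : ↥(Uᶜ) => (i : Fin N)) (fun j : ↥U => (j : Fin N)) * A⁻¹)
              *ᵥ (fun i : ↥U => η i)) = b - (Bᵀ * A⁻¹) *ᵥ a := by
        rw [hBt, Matrix.neg_mul, Matrix.neg_mulVec]
        funext i
        simp [hbdef, hadef]
      have hinv : (Hmat W β)⁻¹.submatrix e e = (fromBlocks A B Bᵀ D)⁻¹ := by
        rw [← hblock]
        exact (inv_submatrix_equiv (Hmat W β) e e).symm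
      have hq1 : θ ⬝ᵥ Hmat W β *ᵥ θ
          = Sum.elim x y ⬝ᵥ (fromBlocks A B Bᵀ D) *ᵥ Sum.elim x y := by
        rw [nuF_quad_equiv e, hblock, hθe]
      have hq2 : η ⬝ᵥ (Hmat W β)⁻¹ *ᵥ η
          = Sum.elim a b ⬝ᵥ (fromBlocks A B Bᵀ D)⁻¹ *ᵥ Sum.elim a b := by
        rw [nuF_quad_equiv e, hinv, hηe]
      have hq3 : η ⬝ᵥ θ = Sum.elim a b ⬝ᵥ Sum.elim x y := by
        rw [← nuF_dotProduct_comp_equiv e η θ, hηe, hθe]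
      have hexp := nuF_exponent_eq A B D hA (hSdef ▸ hS) hAt hDt x a y b
      rw [← hSdef] at hexp
      have hdet : (Hmat W β).det = A.det * S.det := by
        rw [← det_submatrix_equiv_self e, hblock, det_fromBlocks₁₁, hSdef,
          invOf_eq_nonsing_inv]
      have hcard : ((Fintype.card (Fin N) : ℝ) / 2)
          = (Fintype.card ↥U : ℝ) / 2 + (Fintype.card ↥(Uᶜ) : ℝ) / 2 := by
        rw [Fintype.card_coe, Fintype.card_coe, ← Finset.card_add_card_compl U]
        push_cast; ring
      have hpow : (2 / Real.pi) ^ ((Fintype.card (Fin N) : ℝ) / 2)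
          = (2 / Real.pi) ^ ((Fintype.card ↥U : ℝ) / 2)
            * (2 / Real.pi) ^ ((Fintype.card ↥(Uᶜ) : ℝ) / 2) := by
        rw [hcard, Real.rpow_add (by positivity)]
      have hprod : (∏ i, θ i) = (∏ i : ↥U, θ i) * (∏ i : ↥(Uᶜ), θ i) := by
        rw [Finset.prod_coe_sort, Finset.prod_coe_sort, Finset.prod_mul_prod_compl]
      unfold nuDens
      rw [hAeq, hSeq, hhat, hcheck]
      rw [if_pos hH, if_pos hA, if_pos hS]
      rw [hq1, hq2, hq3, hexp, Real.exp_add, hdet, Real.sqrt_mul hA.det_pos.le, hpow, hprod]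
      ring
    · -- not positive definite: both sides vanish
      have hnS : ¬ S.PosDef := fun h => hH (hiff.2 h)
      unfold nuDens
      rw [hSeq, if_neg hH, if_neg hnS]
      ring
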